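/- Let f be a homogeneous cubic polynomial in n variables with real coefficients and let r ≥ 3 be an integer. Then f_{Δ(n,r)} − f_min^{(r−3)} ≤ (4r/((r−1)(r−2))) (f̄ − f̲). -/

import Mathlib

open Finset

noncomputable section

/-- Falling factorial `t^(d) = t (t-1) ⋯ (t-d+1)`. -/
def fall (t : ℝ) : ℕ → ℝ
  | 0 => 1
  | d + 1 => fall t d * (t - (d : ℝ))

/-- The regular grid `Δ(n,r) = {x ∈ Δ_n : r·x ∈ ℕ^n}`. -/
def regularGrid (n r : ℕ) : Set (Fin n → ℝ) :=
  {x ∈ stdSimplex ℝ (Fin n) | ∀ i, ∃ k : ℕ, (r : ℝ) * x i = (k : ℝ)}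

/-- `f_{Δ(n,r)}`, the minimum of `f` over the regular grid. -/
def minGrid (n r : ℕ) (f : (Fin n → ℝ) → ℝ) : ℝ :=
  sInf (f '' regularGrid n r)

/-- `f̲`, the minimum of `f` over the standard simplex. -/
def minSimplex (n : ℕ) (f : (Fin n → ℝ) → ℝ) : ℝ :=
  sInf (f '' stdSimplex ℝ (Fin n))

/-- `f̄`, the maximum of `f` over the standard simplex. -/
def maxSimplex (n : ℕ) (f : (Fin n → ℝ) → ℝ) : ℝ :=
  sSup (f '' stdSimplex ℝ (Fin n))

/-- The homogeneous polynomial of degree `d` with coefficients `c`,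
`f(x) = Σ_{β ∈ I(n,d)} c_β x^β`. -/
def homPoly (n d : ℕ) (c : (Fin n → ℕ) → ℝ) (x : Fin n → ℝ) : ℝ :=
  ∑ β ∈ Finset.Nat.antidiagonalTuple n d, c β * ∏ i, x i ^ β i

/-- The Pólya-type lower bound
`f_min^{(r-d)} = min_{α ∈ I(n,r)} Σ_{β ∈ I(n,d)} c_β α^{(β)} / r^{(d)}`. -/
def polyaBound (n d r : ℕ) (c : (Fin n → ℕ) → ℝ) : ℝ :=
  sInf ((fun α : Fin n → ℕ =>
      (∑ β ∈ Finset.Nat.antidiagonalTuple n d,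
        c β * ∏ i, fall ((α i : ℕ) : ℝ) (β i)) / fall (r : ℝ) d) ''
    {α : Fin n → ℕ | ∑ i, α i = r})

/-! ### Auxiliary material -/

lemma prod_add_linear {ι : Type*} [DecidableEq ι] (s : Finset ι) (A v : ι → ℝ)
    (h : ∀ i ∈ s, ∀ j ∈ s, i ≠ j → v i * v j = 0) :
    ∏ i ∈ s, (A i + v i) = ∏ i ∈ s, A i + ∑ i ∈ s, v i * ∏ j ∈ s.erase i, A j := by
  induction s using Finset.cons_induction with
  | empty => simp
  | cons a s ha ih =>
    rw [Finset.prod_cons, ih (fun i hi j hj hij => h i (Finset.mem_cons_of_mem hi) j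
      (Finset.mem_cons_of_mem hj) hij)]
    rw [Finset.prod_cons, Finset.sum_cons]
    have h1 : (Finset.cons a s ha).erase a = s := by
      rw [Finset.erase_cons]
    have h2 : ∀ i ∈ s, (Finset.cons a s ha).erase i = Finset.cons a (s.erase i)
        (fun hmem => ha (Finset.mem_of_mem_erase hmem)) := by
      intro i hi
      exact Finset.erase_cons_of_ne ha (fun hh => ha (hh ▸ hi))
    have h3 : ∑ i ∈ s, v i * ∏ j ∈ (Finset.cons a s ha).erase i, A j
        = A a * ∑ i ∈ s, v i * ∏ j ∈ s.erase i, A j := by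
      rw [Finset.mul_sum]
      refine Finset.sum_congr rfl fun i hi => ?_
      rw [h2 i hi, Finset.prod_cons]; ring
    have h4 : ∑ i ∈ s, v a * (v i * ∏ j ∈ s.erase i, A j) = 0 := by
      refine Finset.sum_eq_zero fun i hi => ?_
      have := h a (Finset.mem_cons_self a s) i (Finset.mem_cons_of_mem hi)
        (fun hh => ha (hh ▸ hi))
      rw [← mul_assoc, this, zero_mul]
    rw [h1, h3]
    rw [mul_add, add_mul, add_mul, Finset.mul_sum, Finset.mul_sum]
    rw [show ∑ i ∈ s, v a * (v i * ∏ j ∈ s.erase i, A j) = 0 from h4]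
    ring

lemma fall_eq (a : ℝ) (b : ℕ) (hb : b ≤ 3) :
    fall a b = a ^ b + (-(((b.choose 2 : ℕ) : ℝ) * a ^ (b - 1))
      + 2 * (((b.choose 3 : ℕ) : ℝ) * a ^ (b - 2))) := by
  interval_cases b <;> simp [fall, Nat.choose] <;> ring

lemma fall_three (r : ℝ) : fall r 3 = r * (r - 1) * (r - 2) := by
  unfold fall fall fall fall
  push_cast
  ring

lemma beta_le (n : ℕ) (β : Fin n → ℕ) (hβ : ∑ i, β i = 3) (i : Fin n) : β i ≤ 3 :=
  hβ ▸ Finset.single_le_sum (fun j _ => Nat.zero_le (β j)) (Finset.mem_univ i)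

lemma sum_erase_eq (n : ℕ) (β : Fin n → ℕ) (hβ : ∑ i, β i = 3) (i : Fin n) :
    ∑ j ∈ Finset.univ.erase i, β j = 3 - β i := by
  have := Finset.sum_erase_add Finset.univ β (Finset.mem_univ i)
  omega

lemma perBeta (n : ℕ) (a : Fin n → ℝ) (β : Fin n → ℕ) (hβ : ∑ i, β i = 3) :
    ∏ i, fall (a i) (β i) =
      (∏ i, a i ^ β i)
      - (∑ i, ((β i).choose 2 : ℝ) * a i ^ (β i - 1) * ∏ j ∈ Finset.univ.erase i, a j ^ β j)
      + (∑ i, 2 * ((β i).choose 3 : ℝ) * a i ^ (β i - 2) * ∏ j ∈ Finset.univ.erase i, a j ^ β j) := by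
  have hb := beta_le n β hβ
  have hrw : ∏ i, fall (a i) (β i) = ∏ i, (a i ^ β i +
      (-(((β i).choose 2 : ℝ) * a i ^ (β i - 1))
        + 2 * (((β i).choose 3 : ℝ) * a i ^ (β i - 2)))) :=
    Finset.prod_congr rfl fun i _ => fall_eq (a i) (β i) (hb i)
  rw [hrw, prod_add_linear]
  · have hsplit : ∑ i, (-(((β i).choose 2 : ℝ) * a i ^ (β i - 1))
        + 2 * (((β i).choose 3 : ℝ) * a i ^ (β i - 2))) * ∏ j ∈ Finset.univ.erase i, a j ^ β j
        = ∑ i, (-(((β i).choose 2 : ℝ) * a i ^ (β i - 1) * ∏ j ∈ Finset.univ.erase i, a j ^ β j)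
          + 2 * ((β i).choose 3 : ℝ) * a i ^ (β i - 2) * ∏ j ∈ Finset.univ.erase i, a j ^ β j) :=
      Finset.sum_congr rfl fun i _ => by ring
    rw [hsplit, Finset.sum_add_distrib, Finset.sum_neg_distrib]
    ring
  · intro i _ j _ hij
    have hpair : β i + β j ≤ 3 := by
      have : ∑ k ∈ ({i, j} : Finset (Fin n)), β k ≤ ∑ k, β k :=
        Finset.sum_le_sum_of_subset (Finset.subset_univ _)
      rw [Finset.sum_pair hij] at this
      omega
    rcases le_or_gt (β i) 1 with h1 | h1
    · have c2 : (β i).choose 2 = 0 := Nat.choose_eq_zero_of_lt (by omega)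
      have c3 : (β i).choose 3 = 0 := Nat.choose_eq_zero_of_lt (by omega)
      simp [c2, c3]
    · have h2 : β j ≤ 1 := by omega
      have c2 : (β j).choose 2 = 0 := Nat.choose_eq_zero_of_lt (by omega)
      have c3 : (β j).choose 3 = 0 := Nat.choose_eq_zero_of_lt (by omega)
      simp [c2, c3]

/-- quadratic correction -/
def Qx (n : ℕ) (c : (Fin n → ℕ) → ℝ) (x : Fin n → ℝ) : ℝ :=
  ∑ β ∈ Finset.Nat.antidiagonalTuple n 3, c β *
    ∑ i, ((β i).choose 2 : ℝ) * x i ^ (β i - 1) * ∏ j ∈ Finset.univ.erase i, x j ^ β j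

/-- linear correction -/
def Lx (n : ℕ) (c : (Fin n → ℕ) → ℝ) (x : Fin n → ℝ) : ℝ :=
  ∑ β ∈ Finset.Nat.antidiagonalTuple n 3, c β *
    ∑ i, 2 * ((β i).choose 3 : ℝ) * x i ^ (β i - 2) * ∏ j ∈ Finset.univ.erase i, x j ^ β j

lemma scale_prod (n : ℕ) (r : ℝ) (x : Fin n → ℝ) (β : Fin n → ℕ) (hβ : ∑ i, β i = 3) :
    ∏ i, (r * x i) ^ β i = r ^ 3 * ∏ i, x i ^ β i := by
  simp only [mul_pow, Finset.prod_mul_distrib, Finset.prod_pow_eq_pow_sum, hβ]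

lemma scale_q (n : ℕ) (r : ℝ) (x : Fin n → ℝ) (β : Fin n → ℕ) (hβ : ∑ i, β i = 3) (i : Fin n) :
    ((β i).choose 2 : ℝ) * (r * x i) ^ (β i - 1) *
        ∏ j ∈ Finset.univ.erase i, (r * x j) ^ β j
      = r ^ 2 * (((β i).choose 2 : ℝ) * x i ^ (β i - 1) *
        ∏ j ∈ Finset.univ.erase i, x j ^ β j) := by
  rcases le_or_gt 2 (β i) with h2 | h2
  · have hprod : ∏ j ∈ Finset.univ.erase i, (r * x j) ^ β j
        = r ^ (3 - β i) * ∏ j ∈ Finset.univ.erase i, x j ^ β j := by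
      simp only [mul_pow, Finset.prod_mul_distrib, Finset.prod_pow_eq_pow_sum,
        sum_erase_eq n β hβ i]
    rw [hprod, mul_pow]
    have hpow : r ^ (β i - 1) * r ^ (3 - β i) = r ^ 2 := by
      rw [← pow_add]
      congr 1
      have := beta_le n β hβ i
      omega
    calc ((β i).choose 2 : ℝ) * (r ^ (β i - 1) * x i ^ (β i - 1)) *
          (r ^ (3 - β i) * ∏ j ∈ Finset.univ.erase i, x j ^ β j)
        = (r ^ (β i - 1) * r ^ (3 - β i)) * (((β i).choose 2 : ℝ) * x i ^ (β i - 1) *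
          ∏ j ∈ Finset.univ.erase i, x j ^ β j) := by ring
      _ = _ := by rw [hpow]
  · have : (β i).choose 2 = 0 := Nat.choose_eq_zero_of_lt (by omega)
    simp [this]

lemma scale_l (n : ℕ) (r : ℝ) (x : Fin n → ℝ) (β : Fin n → ℕ) (hβ : ∑ i, β i = 3) (i : Fin n) :
    2 * ((β i).choose 3 : ℝ) * (r * x i) ^ (β i - 2) *
        ∏ j ∈ Finset.univ.erase i, (r * x j) ^ β j
      = r * (2 * ((β i).choose 3 : ℝ) * x i ^ (β i - 2) *
        ∏ j ∈ Finset.univ.erase i, x j ^ β j) := by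
  rcases le_or_gt 3 (β i) with h2 | h2
  · have hprod : ∏ j ∈ Finset.univ.erase i, (r * x j) ^ β j
        = r ^ (3 - β i) * ∏ j ∈ Finset.univ.erase i, x j ^ β j := by
      simp only [mul_pow, Finset.prod_mul_distrib, Finset.prod_pow_eq_pow_sum,
        sum_erase_eq n β hβ i]
    rw [hprod, mul_pow]
    have hpow : r ^ (β i - 2) * r ^ (3 - β i) = r ^ 1 := by
      rw [← pow_add]
      congr 1
      have := beta_le n β hβ i
      omega
    calc 2 * ((β i).choose 3 : ℝ) * (r ^ (β i - 2) * x i ^ (β i - 2)) *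
          (r ^ (3 - β i) * ∏ j ∈ Finset.univ.erase i, x j ^ β j)
        = (r ^ (β i - 2) * r ^ (3 - β i)) * (2 * ((β i).choose 3 : ℝ) * x i ^ (β i - 2) *
          ∏ j ∈ Finset.univ.erase i, x j ^ β j) := by ring
      _ = _ := by rw [hpow]; ring
  · have : (β i).choose 3 = 0 := Nat.choose_eq_zero_of_lt (by omega)
    simp [this]

lemma key_identity (n : ℕ) (r : ℝ) (c : (Fin n → ℕ) → ℝ) (x : Fin n → ℝ) :
    ∑ β ∈ Finset.Nat.antidiagonalTuple n 3, c β * ∏ i, fall (r * x i) (β i)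
      = r ^ 3 * homPoly n 3 c x - r ^ 2 * Qx n c x + r * Lx n c x := by
  unfold homPoly Qx Lx
  rw [Finset.mul_sum, Finset.mul_sum, Finset.mul_sum, ← Finset.sum_sub_distrib,
    ← Finset.sum_add_distrib]
  refine Finset.sum_congr rfl fun β hβmem => ?_
  have hβ : ∑ i, β i = 3 := (Finset.Nat.mem_antidiagonalTuple.mp hβmem)
  rw [perBeta n (fun i => r * x i) β hβ]
  simp only [scale_prod n r x β hβ]
  rw [Finset.sum_congr rfl fun i _ => scale_q n r x β hβ i,
    Finset.sum_congr rfl fun i _ => scale_l n r x β hβ i,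
    ← Finset.mul_sum, ← Finset.mul_sum]
  ring

/-- the tuple `2·e_i + e_k` -/
def db (n : ℕ) (i k : Fin n) : Fin n → ℕ :=
  fun j => (if j = i then 2 else 0) + (if j = k then 1 else 0)

lemma db_sum (n : ℕ) (i k : Fin n) : ∑ j, db n i k j = 3 := by
  unfold db
  rw [Finset.sum_add_distrib]
  simp

lemma db_mem (n : ℕ) (i k : Fin n) :
    db n i k ∈ Finset.Nat.antidiagonalTuple n 3 :=
  Finset.Nat.mem_antidiagonalTuple.mpr (db_sum n i k)

lemma db_self_apply (n : ℕ) (i j : Fin n) (hj : j ≠ i) : db n i i j = 0 := by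
  simp [db, hj]

lemma db_app_i (n : ℕ) (i k : Fin n) (hk : k ≠ i) : db n i k i = 2 := by
  simp [db, Ne.symm hk]

lemma db_inj (n : ℕ) (i : Fin n) : Function.Injective (db n i) := by
  intro k k' h
  by_contra hkk'
  have h1 := congrFun h k
  simp only [db] at h1
  split_ifs at h1 <;> omega

lemma resid (n : ℕ) (β : Fin n → ℕ) (hβ : ∑ i, β i = 3) (i : Fin n) (h2 : 2 ≤ β i) :
    ∃ k, β = db n i k := by
  have hle := sum_erase_eq n β hβ i
  rcases Nat.lt_or_ge (β i) 3 with h3 | h3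
  · have hbi : β i = 2 := by omega
    have hsum : ∑ j ∈ Finset.univ.erase i, β j = 1 := by omega
    have hne : ∑ j ∈ Finset.univ.erase i, β j ≠ 0 := by omega
    obtain ⟨k, hk, hknz⟩ := Finset.exists_ne_zero_of_sum_ne_zero hne
    have hki : k ≠ i := (Finset.mem_erase.mp hk).1
    have hrest := Finset.sum_erase_add (Finset.univ.erase i) β hk
    have hbk : β k = 1 := by omega
    have hzero : ∑ j ∈ (Finset.univ.erase i).erase k, β j = 0 := by omega
    refine ⟨k, funext fun j => ?_⟩
    by_cases hji : j = i
    · subst hji; simp [db, Ne.symm hki, hbi]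
    · by_cases hjk : j = k
      · subst hjk; simp [db, hji, hbk]
      · have hjm : j ∈ (Finset.univ.erase i).erase k := by
          simp [Finset.mem_erase, hji, hjk]
        have := (Finset.sum_eq_zero_iff.mp hzero) j hjm
        simp [db, hji, hjk, this]
  · have hbi : β i = 3 := by
      have : β i ≤ ∑ j, β j := Finset.single_le_sum (fun j _ => Nat.zero_le _) (Finset.mem_univ i)
      omega
    have hzero : ∑ j ∈ Finset.univ.erase i, β j = 0 := by omega
    refine ⟨i, funext fun j => ?_⟩
    by_cases hji : j = i
    · subst hji; simp [db, hbi]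
    · have hjm : j ∈ Finset.univ.erase i := by simp [hji]
      have := (Finset.sum_eq_zero_iff.mp hzero) j hjm
      simp [db, hji, this]

lemma Qx_eq (n : ℕ) (c : (Fin n → ℕ) → ℝ) (x : Fin n → ℝ) :
    Qx n c x = ∑ i, (c (db n i i) * (3 * x i ^ 2)
      + ∑ k ∈ Finset.univ.erase i, c (db n i k) * (x i * x k)) := by
  unfold Qx
  rw [Finset.sum_congr rfl fun β _ => Finset.mul_sum _ _ _, Finset.sum_comm]
  refine Finset.sum_congr rfl fun i _ => ?_
  have hsub : Finset.univ.image (db n i) ⊆ Finset.Nat.antidiagonalTuple n 3 := by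
    intro β hβ
    obtain ⟨k, _, rfl⟩ := Finset.mem_image.mp hβ
    exact db_mem n i k
  rw [← Finset.sum_subset hsub (fun β hβm hβni => ?_)]
  · rw [Finset.sum_image (fun k _ k' _ h => db_inj n i h)]
    rw [← Finset.sum_erase_add Finset.univ _ (Finset.mem_univ i)]
    have hterm1 : c (db n i i) * (((db n i i i).choose 2 : ℝ) * x i ^ (db n i i i - 1) *
        ∏ j ∈ Finset.univ.erase i, x j ^ (db n i i j)) = c (db n i i) * (3 * x i ^ 2) := by
      have hii : db n i i i = 3 := by simp [db]
      have hprod : ∏ j ∈ Finset.univ.erase i, x j ^ (db n i i j) = 1 :=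
        Finset.prod_eq_one fun j hj => by
          rw [db_self_apply n i j (Finset.mem_erase.mp hj).1]; simp
      rw [hii, hprod]
      norm_num
    have hterm2 : ∀ k ∈ Finset.univ.erase i,
        c (db n i k) * (((db n i k i).choose 2 : ℝ) * x i ^ (db n i k i - 1) *
          ∏ j ∈ Finset.univ.erase i, x j ^ (db n i k j))
        = c (db n i k) * (x i * x k) := by
      intro k hk
      have hki : k ≠ i := (Finset.mem_erase.mp hk).1
      have h1 : db n i k i = 2 := db_app_i n i k hki
      have hprod : ∏ j ∈ Finset.univ.erase i, x j ^ (db n i k j) = x k := by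
        refine Finset.prod_eq_single_of_mem k hk (fun j hj hjk => ?_) |>.trans ?_
        · have hji : j ≠ i := (Finset.mem_erase.mp hj).1
          simp [db, hji, hjk]
        · simp [db, hki]
      rw [h1, hprod]
      norm_num
      all_goals ring
    rw [hterm1, Finset.sum_congr rfl hterm2]
    ring
  · have hβ3 : ∑ j, β j = 3 := Finset.Nat.mem_antidiagonalTuple.mp hβm
    have hlt : β i < 2 := by
      by_contra hge
      obtain ⟨k, rfl⟩ := resid n β hβ3 i (by omega)
      exact hβni (Finset.mem_image.mpr ⟨k, Finset.mem_univ k, rfl⟩)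
    have : (β i).choose 2 = 0 := Nat.choose_eq_zero_of_lt (by omega)
    simp [this]

lemma Lx_eq (n : ℕ) (c : (Fin n → ℕ) → ℝ) (x : Fin n → ℝ) :
    Lx n c x = ∑ i, c (db n i i) * (2 * x i) := by
  unfold Lx
  rw [Finset.sum_congr rfl fun β _ => Finset.mul_sum _ _ _, Finset.sum_comm]
  refine Finset.sum_congr rfl fun i _ => ?_
  rw [Finset.sum_eq_single_of_mem (db n i i) (db_mem n i i) (fun β hβm hβne => ?_)]
  · have hii : db n i i i = 3 := by simp [db]
    have hprod : ∏ j ∈ Finset.univ.erase i, x j ^ (db n i i j) = 1 :=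
      Finset.prod_eq_one fun j hj => by
        rw [db_self_apply n i j (Finset.mem_erase.mp hj).1]; simp
    rw [hii, hprod]
    norm_num
    all_goals ring
  · have hβ3 : ∑ j, β j = 3 := Finset.Nat.mem_antidiagonalTuple.mp hβm
    have hlt : β i < 3 := by
      by_contra hge
      obtain ⟨k, rfl⟩ := resid n β hβ3 i (by omega)
      have hk : k = i := by
        by_contra hki
        have := db_app_i n i k hki
        omega
      exact hβne (by rw [hk])
    have : (β i).choose 3 = 0 := Nat.choose_eq_zero_of_lt (by omega)
    simp [this]

def unitv (n : ℕ) (i : Fin n) : Fin n → ℝ := fun j => if j = i then 1 else 0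
def midv (n : ℕ) (i k : Fin n) : Fin n → ℝ := fun j => if j = i ∨ j = k then 1/2 else 0

lemma unitv_mem (n : ℕ) (i : Fin n) : unitv n i ∈ stdSimplex ℝ (Fin n) := by
  constructor
  · intro j
    unfold unitv
    split <;> norm_num
  · unfold unitv
    simp [Finset.sum_ite_eq']

lemma midv_mem (n : ℕ) (i k : Fin n) (hik : i ≠ k) : midv n i k ∈ stdSimplex ℝ (Fin n) := by
  constructor
  · intro j
    unfold midv
    split <;> norm_num
  · unfold midv
    rw [show (∑ x : Fin n, if x = i ∨ x = k then (1:ℝ)/2 else 0)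
        = ∑ x : Fin n, ((if x = i then (1:ℝ)/2 else 0) + (if x = k then (1:ℝ)/2 else 0)) from
      Finset.sum_congr rfl fun x _ => by
        rcases eq_or_ne x i with rfl | h1
        · simp [hik]
        · rcases eq_or_ne x k with rfl | h2
          · simp [h1]
          · simp [h1, h2]]
    rw [Finset.sum_add_distrib]
    simp [Finset.sum_ite_eq']
    norm_num

lemma homPoly_unitv (n : ℕ) (c : (Fin n → ℕ) → ℝ) (i : Fin n) :
    homPoly n 3 c (unitv n i) = c (db n i i) := by
  unfold homPoly
  rw [Finset.sum_eq_single_of_mem (db n i i) (db_mem n i i) (fun β hβm hβne => ?_)]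
  · have hprod : ∏ j, (unitv n i j) ^ (db n i i j) = 1 :=
      Finset.prod_eq_one fun j _ => by
        by_cases hj : j = i
        · subst hj; simp [unitv, db]
        · simp [unitv, db, hj]
    rw [hprod, mul_one]
  · have hβ3 : ∑ j, β j = 3 := Finset.Nat.mem_antidiagonalTuple.mp hβm
    have : ∃ j, j ≠ i ∧ β j ≠ 0 := by
      by_contra hcon
      push_neg at hcon
      apply hβne
      have hz : ∑ j ∈ Finset.univ.erase i, β j = 0 :=
        Finset.sum_eq_zero fun j hj => hcon j (Finset.mem_erase.mp hj).1
      have h3 : β i = 3 := by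
        have := sum_erase_eq n β hβ3 i
        have hle : β i ≤ 3 := hβ3 ▸ Finset.single_le_sum
          (fun j _ => Nat.zero_le _) (Finset.mem_univ i)
        omega
      funext j
      by_cases hj : j = i
      · subst hj; simp [db, h3]
      · simp [db, hj, hcon j hj]
    obtain ⟨j, hji, hjnz⟩ := this
    have : (unitv n i j) ^ (β j) = 0 := by
      simp [unitv, hji, zero_pow hjnz]
    rw [Finset.prod_eq_zero (Finset.mem_univ j) this, mul_zero]

lemma support_ik (n : ℕ) (β : Fin n → ℕ) (hβ : ∑ j, β j = 3) (i k : Fin n) (hik : i ≠ k)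
    (h : ∀ j, j ≠ i → j ≠ k → β j = 0) :
    β = db n i i ∨ β = db n i k ∨ β = db n k i ∨ β = db n k k := by
  have hsum2 : β i + β k = 3 := by
    have hsub : ∑ j ∈ ({i, k} : Finset (Fin n)), β j = ∑ j, β j := by
      refine Finset.sum_subset (Finset.subset_univ _) fun j _ hj => ?_
      simp only [Finset.mem_insert, Finset.mem_singleton] at hj
      push_neg at hj
      exact h j hj.1 hj.2
    rw [Finset.sum_pair hik] at hsub
    omega
  have hcases : β i = 3 ∧ β k = 0 ∨ β i = 2 ∧ β k = 1 ∨ β i = 1 ∧ β k = 2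
      ∨ β i = 0 ∧ β k = 3 := by omega
  have key : ∀ (p q : Fin n), p ≠ q → β p = 2 → β q = 1 →
      (∀ j, j ≠ p → j ≠ q → β j = 0) → β = db n p q := by
    intro p q hpq hp hq hpz
    funext j
    by_cases hjp : j = p
    · subst hjp; simp [db, hpq, hp]
    · by_cases hjq : j = q
      · subst hjq; simp [db, Ne.symm hpq, hq]
      · simp [db, hjp, hjq, hpz j hjp hjq]
  have key3 : ∀ (p q : Fin n), p ≠ q → β p = 3 → β q = 0 →
      (∀ j, j ≠ p → j ≠ q → β j = 0) → β = db n p p := by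
    intro p q hpq hp hq hpz
    funext j
    by_cases hjp : j = p
    · subst hjp; simp [db, hp]
    · by_cases hjq : j = q
      · subst hjq; simp [db, Ne.symm hpq, hq]
      · simp [db, hjp, hpz j hjp hjq]
  rcases hcases with ⟨h1, h2⟩ | ⟨h1, h2⟩ | ⟨h1, h2⟩ | ⟨h1, h2⟩
  · exact Or.inl (key3 i k hik h1 h2 h)
  · exact Or.inr (Or.inl (key i k hik h1 h2 h))
  · exact Or.inr (Or.inr (Or.inl (key k i (Ne.symm hik) h2 h1
      (fun j hjk hji => h j hji hjk))))
  · exact Or.inr (Or.inr (Or.inr (key3 k i (Ne.symm hik) h2 h1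
      (fun j hjk hji => h j hji hjk))))

lemma prod_midv (n : ℕ) (i k : Fin n) (hik : i ≠ k) (β : Fin n → ℕ)
    (h : ∀ j, j ≠ i → j ≠ k → β j = 0) (hsum2 : β i + β k = 3) :
    ∏ j, (midv n i k j) ^ (β j) = 1/8 := by
  have h1 : ∏ j, (midv n i k j) ^ (β j) = ∏ j ∈ ({i, k} : Finset (Fin n)), (midv n i k j) ^ (β j) := by
    refine (Finset.prod_subset (Finset.subset_univ _) fun j _ hj => ?_).symm
    simp only [Finset.mem_insert, Finset.mem_singleton] at hj
    push_neg at hj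
    rw [h j hj.1 hj.2, pow_zero]
  rw [h1, Finset.prod_pair hik]
  have mi : midv n i k i = 1/2 := by simp [midv]
  have mk : midv n i k k = 1/2 := by simp [midv]
  rw [mi, mk, ← pow_add, hsum2]
  norm_num

lemma homPoly_midv (n : ℕ) (c : (Fin n → ℕ) → ℝ) (i k : Fin n) (hik : i ≠ k) :
    homPoly n 3 c (midv n i k) =
      (c (db n i i) + c (db n i k) + c (db n k i) + c (db n k k)) / 8 := by
  have hki := Ne.symm hik
  have d1 : db n i i ≠ db n i k := fun h => by
    have := congrFun h k; simp [db, hki] at this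
  have d2 : db n i i ≠ db n k i := fun h => by
    have := congrFun h k; simp [db, hki] at this
  have d3 : db n i i ≠ db n k k := fun h => by
    have := congrFun h k; simp [db, hki] at this
  have d4 : db n i k ≠ db n k i := fun h => by
    have := congrFun h i; simp [db, hik, hki] at this
  have d5 : db n i k ≠ db n k k := fun h => by
    have := congrFun h i; simp [db, hik, hki] at this
  have d6 : db n k i ≠ db n k k := fun h => by
    have := congrFun h i; simp [db, hik, hki] at this
  have hT : ({db n i i, db n i k, db n k i, db n k k} : Finset (Fin n → ℕ))
      ⊆ Finset.Nat.antidiagonalTuple n 3 := by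
    intro β hβ
    simp only [Finset.mem_insert, Finset.mem_singleton] at hβ
    rcases hβ with rfl | rfl | rfl | rfl <;> exact db_mem n _ _
  unfold homPoly
  rw [← Finset.sum_subset hT (fun β hβm hβni => ?_)]
  · have p1 : ∏ j, (midv n i k j) ^ (db n i i j) = 1/8 :=
      prod_midv n i k hik _ (fun j hji _ => by simp [db, hji])
        (by simp [db, hki])
    have p2 : ∏ j, (midv n i k j) ^ (db n i k j) = 1/8 :=
      prod_midv n i k hik _ (fun j hji hjk => by simp [db, hji, hjk])
        (by simp [db, hik, hki])
    have p3 : ∏ j, (midv n i k j) ^ (db n k i j) = 1/8 :=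
      prod_midv n i k hik _ (fun j hji hjk => by simp [db, hji, hjk])
        (by simp [db, hik, hki])
    have p4 : ∏ j, (midv n i k j) ^ (db n k k j) = 1/8 :=
      prod_midv n i k hik _ (fun j _ hjk => by simp [db, hjk])
        (by simp [db, hik])
    rw [Finset.sum_insert (by simp [d1, d2, d3]),
      Finset.sum_insert (by simp [d4, d5]),
      Finset.sum_insert (by simp [d6]),
      Finset.sum_singleton, p1, p2, p3, p4]
    ring
  · have hβ3 : ∑ j, β j = 3 := Finset.Nat.mem_antidiagonalTuple.mp hβm
    have : ∃ j, j ≠ i ∧ j ≠ k ∧ β j ≠ 0 := by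
      by_contra hcon
      push_neg at hcon
      have := support_ik n β hβ3 i k hik (fun j hji hjk => hcon j hji hjk)
      apply hβni
      simp only [Finset.mem_insert, Finset.mem_singleton]
      tauto
    obtain ⟨j, hji, hjk, hjnz⟩ := this
    have hz : (midv n i k j) ^ (β j) = 0 := by
      simp [midv, hji, hjk, zero_pow hjnz]
    rw [Finset.prod_eq_zero (Finset.mem_univ j) hz, mul_zero]

lemma double_to_offDiag (n : ℕ) (g : Fin n → Fin n → ℝ) :
    ∑ i, ∑ k ∈ Finset.univ.erase i, g i k
      = ∑ p ∈ Finset.univ.offDiag (α := Fin n), g p.1 p.2 := by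
  rw [show Finset.univ.offDiag (α := Fin n) = (Finset.univ ×ˢ Finset.univ).filter (fun a : Fin n × Fin n => a.1 ≠ a.2) from by ext; simp, Finset.sum_filter, Finset.sum_product]
  refine Finset.sum_congr rfl fun i _ => ?_
  have h1 : (Finset.univ.filter fun x : Fin n => (i, x).1 ≠ (i, x).2)
      = Finset.univ.erase i := Finset.filter_ne _ _
  rw [← Finset.sum_filter, h1]

lemma offDiag_pair (n : ℕ) (g : Fin n → Fin n → ℝ) :
    ∑ p ∈ Finset.univ.offDiag (α := Fin n), g p.1 p.2
      = ∑ p ∈ (Finset.univ.offDiag (α := Fin n)).filter (fun p => p.1 < p.2),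
          (g p.1 p.2 + g p.2 p.1) := by
  rw [← Finset.sum_filter_add_sum_filter_not (Finset.univ.offDiag) (fun p => p.1 < p.2)]
  rw [Finset.sum_add_distrib]
  congr 1
  refine Finset.sum_nbij' Prod.swap Prod.swap ?_ ?_ ?_ ?_ ?_
  · intro p hp
    simp only [Finset.mem_filter, Finset.mem_offDiag] at hp ⊢
    obtain ⟨⟨_, _, hne⟩, hnlt⟩ := hp
    exact ⟨⟨by simp, by simp, Ne.symm hne⟩, lt_of_le_of_ne (not_lt.mp hnlt) (Ne.symm hne)⟩
  · intro p hp
    simp only [Finset.mem_filter, Finset.mem_offDiag] at hp ⊢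
    obtain ⟨⟨_, _, hne⟩, hlt⟩ := hp
    exact ⟨⟨by simp, by simp, Ne.symm hne⟩, not_lt.mpr (le_of_lt hlt)⟩
  · intro p _; simp
  · intro p _; simp
  · intro p _; rfl

lemma homPoly_continuous (n d : ℕ) (c : (Fin n → ℕ) → ℝ) : Continuous (homPoly n d c) := by
  unfold homPoly
  exact continuous_finset_sum _ fun β _ =>
    continuous_const.mul (continuous_finset_prod _ fun i _ => (continuous_apply i).pow _)

/-- for `f` homogeneous cubic and `r ≥ 3`,
`f_{Δ(n,r)} − f_min^{(r−3)} ≤ (4r/((r−1)(r−2)))(f̄ − f̲)`. -/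
theorem statement5 (n r : ℕ) (hn : 0 < n) (hr : 3 ≤ r) (c : (Fin n → ℕ) → ℝ) :
    minGrid n r (homPoly n 3 c) - polyaBound n 3 r c ≤
      (4 * (r : ℝ) / (((r : ℝ) - 1) * ((r : ℝ) - 2))) *
        (maxSimplex n (homPoly n 3 c) - minSimplex n (homPoly n 3 c)) := by
  have i0 : Fin n := ⟨0, hn⟩
  set f := homPoly n 3 c with hfdef
  set Fmin := minSimplex n f with hFmindef
  set Fmax := maxSimplex n f with hFmaxdef
  set B := (4 * (r : ℝ) / (((r : ℝ) - 1) * ((r : ℝ) - 2))) * (Fmax - Fmin) with hBdef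
  -- basic facts about r
  have hr3 : (3 : ℝ) ≤ (r : ℝ) := by exact_mod_cast hr
  have hr0 : (0 : ℝ) < (r : ℝ) := by linarith
  have hD : (0 : ℝ) < ((r : ℝ) - 1) * ((r : ℝ) - 2) := by nlinarith
  -- compactness facts
  have hcont : Continuous f := homPoly_continuous n 3 c
  have hcomp : IsCompact (f '' stdSimplex ℝ (Fin n)) :=
    (isCompact_stdSimplex ℝ (Fin n)).image hcont
  have hbddB : BddBelow (f '' stdSimplex ℝ (Fin n)) := hcomp.bddBelow
  have hbddA : BddAbove (f '' stdSimplex ℝ (Fin n)) := hcomp.bddAbove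
  have hminle : ∀ y ∈ stdSimplex ℝ (Fin n), Fmin ≤ f y := fun y hy =>
    csInf_le hbddB ⟨y, hy, rfl⟩
  have hmaxge : ∀ y ∈ stdSimplex ℝ (Fin n), f y ≤ Fmax := fun y hy =>
    le_csSup hbddA ⟨y, hy, rfl⟩
  have hFle : Fmin ≤ Fmax :=
    le_trans (hminle _ (unitv_mem n i0)) (hmaxge _ (unitv_mem n i0))
  have hgridsub : regularGrid n r ⊆ stdSimplex ℝ (Fin n) := fun y hy => hy.1
  have hgridbdd : BddBelow (f '' regularGrid n r) :=
    hbddB.mono (Set.image_mono hgridsub)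
  -- coefficient facts
  have hc1 : ∀ i, Fmin ≤ c (db n i i) ∧ c (db n i i) ≤ Fmax := fun i => by
    have hv := homPoly_unitv n c i
    exact ⟨hv ▸ hminle _ (unitv_mem n i), hv ▸ hmaxge _ (unitv_mem n i)⟩
  have hc2 : ∀ i k : Fin n, i ≠ k →
      c (db n i k) + c (db n k i) ≤ 8 * Fmax - 2 * Fmin := fun i k hik => by
    have hv := homPoly_midv n c i k hik
    have h1 := hmaxge _ (midv_mem n i k hik)
    rw [hfdef, hv] at h1
    have h2 := (hc1 i).1
    have h3 := (hc1 k).1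
    linarith
  -- main bound for each grid multi-index α
  have key : ∀ α : Fin n → ℕ, (∑ i, α i) = r →
      minGrid n r f - B ≤
        (∑ β ∈ Finset.Nat.antidiagonalTuple n 3,
          c β * ∏ i, fall ((α i : ℕ) : ℝ) (β i)) / fall (r : ℝ) 3 := by
    intro α hα
    set x : Fin n → ℝ := fun i => (α i : ℝ) / r with hxdef
    have hrx : ∀ i, ((α i : ℕ) : ℝ) = (r : ℝ) * x i := fun i => by
      rw [hxdef]
      field_simp
    have hx_nonneg : ∀ i, 0 ≤ x i := fun i => by
      rw [hxdef]
      positivity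
    have hx_sum : ∑ i, x i = 1 := by
      rw [hxdef]
      rw [← Finset.sum_div]
      rw [show ∑ i, ((α i : ℕ) : ℝ) = ((∑ i, α i : ℕ) : ℝ) from by push_cast; rfl, hα]
      field_simp
    have hx_mem : x ∈ stdSimplex ℝ (Fin n) := ⟨hx_nonneg, hx_sum⟩
    have hx_grid : x ∈ regularGrid n r := ⟨hx_mem, fun i => ⟨α i, (hrx i).symm⟩⟩
    have hmg : minGrid n r f ≤ f x := csInf_le hgridbdd ⟨x, hx_grid, rfl⟩
    -- the identity
    have hid : (∑ β ∈ Finset.Nat.antidiagonalTuple n 3,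
          c β * ∏ i, fall ((α i : ℕ) : ℝ) (β i))
        = (r:ℝ) ^ 3 * f x - (r:ℝ) ^ 2 * Qx n c x + (r:ℝ) * Lx n c x := by
      simp only [hrx]
      exact key_identity n r c x
    -- S and u
    set S := ∑ i, x i ^ 2 with hSdef
    have hS0 : 0 ≤ S := Finset.sum_nonneg fun i _ => sq_nonneg _
    -- bound on Qx
    have hQ : Qx n c x ≤ 4 * Fmax - Fmin := by
      rw [Qx_eq]
      rw [Finset.sum_add_distrib]
      have hpart1 : ∑ i, c (db n i i) * (3 * x i ^ 2) ≤ 3 * Fmax * S := by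
        rw [hSdef, Finset.mul_sum]
        refine Finset.sum_le_sum fun i _ => ?_
        have := (hc1 i).2
        nlinarith [sq_nonneg (x i)]
      set u := ∑ p ∈ (Finset.univ.offDiag (α := Fin n)).filter (fun p => p.1 < p.2),
        x p.1 * x p.2 with hudef
      have hu0 : 0 ≤ u := Finset.sum_nonneg fun p _ =>
        mul_nonneg (hx_nonneg _) (hx_nonneg _)
      have h2u : 2 * u = 1 - S := by
        have e1 : ∑ i, ∑ k ∈ Finset.univ.erase i, x i * x k = 1 - S := by
          have : ∀ i : Fin n, ∑ k ∈ Finset.univ.erase i, x i * x k = x i * (1 - x i) := by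
            intro i
            rw [← Finset.mul_sum]
            congr 1
            have := Finset.sum_erase_add Finset.univ x (Finset.mem_univ i)
            linarith [hx_sum]
          rw [Finset.sum_congr rfl fun i _ => this i]
          rw [hSdef]
          rw [Finset.sum_congr rfl (fun i _ => by ring :
            ∀ i ∈ Finset.univ, x i * (1 - x i) = x i - x i ^ 2), Finset.sum_sub_distrib, hx_sum]
        rw [double_to_offDiag n fun a b => x a * x b,
          offDiag_pair n fun a b => x a * x b] at e1
        rw [hudef, Finset.mul_sum]
        rw [← e1]
        refine Finset.sum_congr rfl fun p _ => by ring
      have hpart2 : ∑ i, ∑ k ∈ Finset.univ.erase i, c (db n i k) * (x i * x k)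
          ≤ (8 * Fmax - 2 * Fmin) * u := by
        rw [double_to_offDiag n fun a b => c (db n a b) * (x a * x b),
          offDiag_pair n fun a b => c (db n a b) * (x a * x b), hudef, Finset.mul_sum]
        refine Finset.sum_le_sum fun p hp => ?_
        have hne : p.1 ≠ p.2 := (Finset.mem_offDiag.mp (Finset.mem_filter.mp hp).1).2.2
        have hcc := hc2 p.1 p.2 hne
        have hxx : 0 ≤ x p.1 * x p.2 := mul_nonneg (hx_nonneg _) (hx_nonneg _)
        calc c (db n p.1 p.2) * (x p.1 * x p.2) + c (db n p.2 p.1) * (x p.2 * x p.1)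
            = (c (db n p.1 p.2) + c (db n p.2 p.1)) * (x p.1 * x p.2) := by ring
          _ ≤ (8 * Fmax - 2 * Fmin) * (x p.1 * x p.2) :=
              mul_le_mul_of_nonneg_right hcc hxx
      have h2u' : (8 * Fmax - 2 * Fmin) * u = (4 * Fmax - Fmin) * (1 - S) := by
        linear_combination (4 * Fmax - Fmin) * h2u
      nlinarith [mul_nonneg hS0 (sub_nonneg.mpr hFle)]
    -- bound on Lx
    have hL : 2 * Fmin ≤ Lx n c x := by
      rw [Lx_eq]
      have : ∀ i ∈ Finset.univ, Fmin * (2 * x i) ≤ c (db n i i) * (2 * x i) := fun i _ =>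
        mul_le_mul_of_nonneg_right (hc1 i).1 (by linarith [hx_nonneg i])
      calc 2 * Fmin = ∑ i, Fmin * (2 * x i) := by
            rw [← Finset.mul_sum, ← Finset.mul_sum, hx_sum]; ring
        _ ≤ _ := Finset.sum_le_sum this
    have hfx1 : Fmin ≤ f x := hminle _ hx_mem
    -- numeric conclusion
    have hfall3 : fall (r : ℝ) 3 = (r : ℝ) * (((r:ℝ) - 1) * ((r:ℝ) - 2)) := by
      rw [fall_three]; ring
    have hfallpos : 0 < fall (r : ℝ) 3 := by rw [hfall3]; positivity
    have hkey2 : f x - B ≤ (∑ β ∈ Finset.Nat.antidiagonalTuple n 3,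
        c β * ∏ i, fall ((α i : ℕ) : ℝ) (β i)) / fall (r : ℝ) 3 := by
      rw [hid, hfall3, le_div_iff₀ (by positivity)]
      have hBD : B * (((r:ℝ) - 1) * ((r:ℝ) - 2)) = 4 * (r:ℝ) * (Fmax - Fmin) := by
        rw [hBdef]
        field_simp
        exact mul_div_cancel_left₀ _ hD.ne'
      have E0 : (f x - B) * ((r:ℝ) * (((r:ℝ) - 1) * ((r:ℝ) - 2)))
          = (r:ℝ) * ((((r:ℝ) - 1) * ((r:ℝ) - 2)) * f x)
            - (r:ℝ) * (B * (((r:ℝ) - 1) * ((r:ℝ) - 2))) := by ring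
      rw [E0, hBD]
      have E1 : (r:ℝ)^2 * (Qx n c x) ≤ (r:ℝ)^2 * (4 * Fmax - Fmin) :=
        mul_le_mul_of_nonneg_left hQ (by positivity)
      have E2 : (3*(r:ℝ) - 2) * Fmin ≤ (3*(r:ℝ) - 2) * (f x) :=
        mul_le_mul_of_nonneg_left hfx1 (by linarith)
      have E2' : (r:ℝ) * ((3*(r:ℝ) - 2) * Fmin) ≤ (r:ℝ) * ((3*(r:ℝ) - 2) * (f x)) :=
        mul_le_mul_of_nonneg_left E2 hr0.le
      have E3 : (r:ℝ) * (2 * Fmin) ≤ (r:ℝ) * Lx n c x :=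
        mul_le_mul_of_nonneg_left hL hr0.le
      nlinarith [E1, E2', E3]
    linarith
  -- conclude via the infimum
  have hne2 : Set.Nonempty ((fun α : Fin n → ℕ =>
      (∑ β ∈ Finset.Nat.antidiagonalTuple n 3,
        c β * ∏ i, fall ((α i : ℕ) : ℝ) (β i)) / fall (r : ℝ) 3) ''
      {α : Fin n → ℕ | ∑ i, α i = r}) := by
    refine ⟨_, ⟨fun j => if j = i0 then r else 0, ?_, rfl⟩⟩
    simp [Finset.sum_ite_eq']
  have hlb : minGrid n r f - B ≤ polyaBound n 3 r c := by
    refine le_csInf hne2 ?_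
    rintro p ⟨α, hα, rfl⟩
    exact key α hα
  linarith
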